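/- (Type I pressure-free solution in a closed universe.) Let n ≥ 2 and N ≥ 2n+1 be integers, α_2, …, α_n real coupling constants, and let C₁ > 0 be a real number satisfying 2 − N + Σ_{i=2}^{n} α_i·k12(i,N)·C₁^{i-1}/i = 0. Then the scale factor a(t) = cosh(√C₁·t)/√C₁ satisfies the generalized Friedmann pressure equation (P) with spatial curvature κ = +1 and p = 0, for all t ∈ ℝ. -/

import Mathlib

noncomputable def binom (m j : ℤ) : ℝ :=
  if 0 ≤ j ∧ j ≤ m then (m.toNat.choose j.toNat : ℝ) else 0

noncomputable def k11 (n N : ℤ) : ℝ :=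
  -(1/2) * ((2*(n-1)).toNat.factorial : ℝ) * ((N : ℝ) - 2) * ((N : ℝ) - 1 - 2*(n : ℝ)) *
    binom (N - 3) (2*(n - 1))

noncomputable def k12 (n N : ℤ) : ℝ :=
  -(1/2) * ((2*(n-1)).toNat.factorial : ℝ) *
    (2*((N : ℝ) - (n : ℝ) - 1) * binom (N - 2) (2*(n - 1))
      + ((N : ℝ) - 2) * ((N : ℝ) - 1 - 2*(n : ℝ)) * binom (N - 3) (2*n - 3))

noncomputable def k21 (n N : ℤ) : ℝ :=
  -(1/2) * ((2*(n-1)).toNat.factorial : ℝ) * ((N : ℝ) - 1) * ((N : ℝ) - 2) *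
    binom (N - 3) (2*(n - 1))

/-- F₁ = (a')²/a² + κ/a². -/
noncomputable def F1 (κ : ℝ) (a : ℝ → ℝ) (t : ℝ) : ℝ :=
  (deriv a t)^2 / (a t)^2 + κ / (a t)^2

/-- F₂ = a''/a. -/
noncomputable def F2 (a : ℝ → ℝ) (t : ℝ) : ℝ :=
  deriv (deriv a) t / a t

lemma key_id (i N : ℕ) (hi : 2 ≤ i) (hN : 2*i + 1 ≤ N) :
    (2*(i:ℝ)) * (k11 i N + k12 i N) = ((N:ℝ) - 1) * k12 i N := by
  obtain ⟨j, rfl⟩ : ∃ j, i = j + 2 := ⟨i - 2, by omega⟩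
  obtain ⟨m, rfl⟩ : ∃ m, N = 2*j + 5 + m := ⟨N - (2*j+5), by omega⟩
  have h1 : ((2*j+5+m : ℕ) : ℤ) - 3 = ((2*j+2+m : ℕ) : ℤ) := by push_cast; ring
  have h2 : ((2*j+5+m : ℕ) : ℤ) - 2 = ((2*j+3+m : ℕ) : ℤ) := by push_cast; ring
  have h3 : (2 : ℤ)*(((j+2:ℕ):ℤ) - 1) = ((2*j+2 : ℕ) : ℤ) := by push_cast; ring
  have h4 : (2 : ℤ)*((j+2:ℕ):ℤ) - 3 = ((2*j+1 : ℕ) : ℤ) := by push_cast; ring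
  simp only [k11, k12, h1, h2, h3, h4, binom]
  rw [if_pos (by constructor <;> [positivity; exact_mod_cast by omega]),
      if_pos (by constructor <;> [positivity; exact_mod_cast by omega]),
      if_pos (by constructor <;> [positivity; exact_mod_cast by omega])]
  simp only [Int.toNat_natCast]
  have hb : (2*j+3+m).choose (2*j+2) = (2*j+2+m).choose (2*j+1) + (2*j+2+m).choose (2*j+2) := by
    have := Nat.choose_succ_succ (2*j+2+m) (2*j+1)
    convert this using 2 <;> omega
  have hd : (2*j+2+m+1) * (2*j+2+m).choose (2*j+1) = (2*j+2+m+1).choose (2*j+2) * (2*j+2) := by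
    have := Nat.add_one_mul_choose_eq (2*j+2+m) (2*j+1)
    simpa using this
  have hb' : ((2*j+3+m).choose (2*j+2) : ℝ)
      = ((2*j+2+m).choose (2*j+1) : ℝ) + ((2*j+2+m).choose (2*j+2) : ℝ) := by exact_mod_cast hb
  have hd' : (2*(j:ℝ)+3+m) * ((2*j+2+m).choose (2*j+1) : ℝ)
      = ((2*j+3+m).choose (2*j+2) : ℝ) * (2*(j:ℝ)+2) := by
    have h5 : (2*j+2+m+1) = 2*j+3+m := by omega
    rw [h5] at hd
    exact_mod_cast hd
  set A : ℝ := ((2*j+2+m).choose (2*j+2) : ℝ)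
  set B : ℝ := ((2*j+3+m).choose (2*j+2) : ℝ)
  set D : ℝ := ((2*j+2+m).choose (2*j+1) : ℝ)
  set f : ℝ := (((2*j+2).factorial : ℕ) : ℝ) with hfdef
  push_cast
  linear_combination (f*((j:ℝ)+2)*(2*(j:ℝ)+3+(m:ℝ))*(m:ℝ)) * hb'
    + (f/2)*(2*(j:ℝ)+4+(m:ℝ))*(m:ℝ) * hd'

lemma deriv_a (c : ℝ) (hc : 0 < c) :
    deriv (fun s => Real.cosh (c * s) / c) = fun t => Real.sinh (c * t) := by
  funext t
  have h : HasDerivAt (fun s => Real.cosh (c * s) / c) (Real.sinh (c * t)) t := by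
    have h1 : HasDerivAt (fun s : ℝ => c * s) c t := by
      simpa using (hasDerivAt_id t).const_mul c
    have h2 := (h1.cosh).div_const c
    simpa [mul_comm, mul_div_assoc, mul_div_cancel_left₀ _ hc.ne'] using h2
  exact h.deriv

lemma deriv_a2 (c : ℝ) (hc : 0 < c) :
    deriv (deriv (fun s => Real.cosh (c * s) / c)) = fun t => c * Real.cosh (c * t) := by
  rw [deriv_a c hc]
  funext t
  have h1 : HasDerivAt (fun s : ℝ => c * s) c t := by
    simpa using (hasDerivAt_id t).const_mul c
  have h2 := h1.sinh
  simpa [mul_comm] using h2.deriv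

lemma F1_eq (C₁ : ℝ) (hC : 0 < C₁) (t : ℝ) :
    F1 1 (fun s => Real.cosh (Real.sqrt C₁ * s) / Real.sqrt C₁) t = C₁ := by
  set c := Real.sqrt C₁ with hcdef
  have hc : 0 < c := Real.sqrt_pos.mpr hC
  have hc2 : c^2 = C₁ := Real.sq_sqrt hC.le
  have hcosh : 0 < Real.cosh (c * t) := Real.cosh_pos (c * t)
  have hs : Real.sinh (c*t)^2 + 1 = Real.cosh (c*t)^2 := (Real.cosh_sq (c*t)).symm
  simp only [F1, deriv_a c hc]
  rw [← add_div, hs, div_pow, div_div_eq_mul_div, mul_comm, mul_div_assoc,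
      div_self (pow_ne_zero 2 hcosh.ne'), mul_one, hc2]

lemma F2_eq (C₁ : ℝ) (hC : 0 < C₁) (t : ℝ) :
    F2 (fun s => Real.cosh (Real.sqrt C₁ * s) / Real.sqrt C₁) t = C₁ := by
  set c := Real.sqrt C₁ with hcdef
  have hc : 0 < c := Real.sqrt_pos.mpr hC
  have hc2 : c^2 = C₁ := Real.sq_sqrt hC.le
  have hcosh : 0 < Real.cosh (c * t) := Real.cosh_pos (c * t)
  simp only [F2, deriv_a2 c hc]
  rw [div_div_eq_mul_div, ← hc2]
  field_simp

theorem closed_pressure_free_solution (n N : ℕ) (hn : 2 ≤ n) (hN : 2*n + 1 ≤ N)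
    (α : ℕ → ℝ) (C₁ : ℝ) (hC : 0 < C₁)
    (hroot : 2 - (N : ℝ)
      + ∑ i ∈ Finset.Icc 2 n, α i * k12 i N * C₁^(i - 1) / (i : ℝ) = 0) :
    ∀ t : ℝ,
      -((N : ℝ) - 2) * (((N : ℝ) - 3)/2
            * F1 1 (fun s => Real.cosh (Real.sqrt C₁ * s) / Real.sqrt C₁) t
          + F2 (fun s => Real.cosh (Real.sqrt C₁ * s) / Real.sqrt C₁) t)
        + ∑ i ∈ Finset.Icc 2 n, α i *
            (F1 1 (fun s => Real.cosh (Real.sqrt C₁ * s) / Real.sqrt C₁) t)^(i - 1) *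
            (k11 i N * F1 1 (fun s => Real.cosh (Real.sqrt C₁ * s) / Real.sqrt C₁) t
              + k12 i N * F2 (fun s => Real.cosh (Real.sqrt C₁ * s) / Real.sqrt C₁) t)
        = 0 := by
  intro t
  rw [F1_eq C₁ hC t, F2_eq C₁ hC t]
  have hsum : ∑ i ∈ Finset.Icc 2 n, α i * C₁^(i-1) * (k11 i N * C₁ + k12 i N * C₁)
      = ∑ i ∈ Finset.Icc 2 n, ((N:ℝ)-1)*C₁/2 * (α i * k12 i N * C₁^(i-1) / (i:ℝ)) := by
    refine Finset.sum_congr rfl fun i hi => ?_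
    obtain ⟨hi2, hin⟩ := Finset.mem_Icc.mp hi
    have hkey := key_id i N hi2 (by omega)
    have hi0 : (i:ℝ) ≠ 0 := by positivity
    have hk : k11 i N + k12 i N = ((N:ℝ)-1) * k12 i N / (2*(i:ℝ)) := by
      rw [eq_div_iff (by positivity)]
      linear_combination hkey
    calc α i * C₁^(i-1) * (k11 i N * C₁ + k12 i N * C₁)
        = α i * C₁^(i-1) * ((k11 i N + k12 i N) * C₁) := by ring
      _ = α i * C₁^(i-1) * (((N:ℝ)-1) * k12 i N / (2*(i:ℝ)) * C₁) := by rw [hk]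
      _ = ((N:ℝ)-1)*C₁/2 * (α i * k12 i N * C₁^(i-1) / (i:ℝ)) := by
          field_simp
  rw [hsum, ← Finset.mul_sum]
  have hS : ∑ i ∈ Finset.Icc 2 n, α i * k12 i N * C₁^(i-1) / (i:ℝ) = (N:ℝ) - 2 := by
    linarith
  rw [hS]
  ring
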